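/- Let A (n×n), B (n×m), C (p×n), K̄, K̲ (m×n), L̄, L̲ (n×p) be real matrices, and let G = [[A + B(K̄ + K̲), BK̄, −BK̲], [0, A − L̄C, 0], [0, 0, A − L̲C]] act on ℝ^{3n}. The cone X_e = {(x, ē, e̲) ∈ ℝ^{3n} : x ≥ 0, ē ≥ 0, 0 ≤ e̲ ≤ x} is invariant under G if and only if the six entrywise inequalities hold: A + B(K̄ + K̲) ≥ 0, A + BK̄ ≥ 0, BK̄ ≥ 0, A − L̄C ≥ 0, A − L̲C ≥ 0, and BK̄ + L̲C ≥ 0. -/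

import Mathlib

open Matrix

/-- The error-coordinate closed-loop map `(x, ē, e̲) ↦ G (x, ē, e̲)` with
`G = [[A + B(K̄ + K̲), BK̄, −BK̲], [0, A − L̄C, 0], [0, 0, A − L̲C]]`. -/
def Gmap {n m p : ℕ}
    (A : Matrix (Fin n) (Fin n) ℝ) (B : Matrix (Fin n) (Fin m) ℝ)
    (C : Matrix (Fin p) (Fin n) ℝ)
    (Ku Kl : Matrix (Fin m) (Fin n) ℝ) (Lu Ll : Matrix (Fin n) (Fin p) ℝ)
    (z : (Fin n → ℝ) × (Fin n → ℝ) × (Fin n → ℝ)) :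
    (Fin n → ℝ) × (Fin n → ℝ) × (Fin n → ℝ) :=
  ((A + B * (Ku + Kl)) *ᵥ z.1 + (B * Ku) *ᵥ z.2.1 - (B * Kl) *ᵥ z.2.2,
   (A - Lu * C) *ᵥ z.2.1,
   (A - Ll * C) *ᵥ z.2.2)

/-- The error cone `X_e = {(x, ē, e̲) : x ≥ 0, ē ≥ 0, 0 ≤ e̲ ≤ x entrywise}`. -/
def errorCone (n : ℕ) : Set ((Fin n → ℝ) × (Fin n → ℝ) × (Fin n → ℝ)) :=
  {z | (∀ i, 0 ≤ z.1 i) ∧ (∀ i, 0 ≤ z.2.1 i) ∧ (∀ i, 0 ≤ z.2.2 i) ∧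
       (∀ i, z.2.2 i ≤ z.1 i)}

private lemma mulVec_entry_nonneg {n m : ℕ} {M : Matrix (Fin n) (Fin m) ℝ} {v : Fin m → ℝ}
    (hM : ∀ i j, 0 ≤ M i j) (hv : ∀ j, 0 ≤ v j) (i : Fin n) : 0 ≤ (M *ᵥ v) i := by
  simp only [mulVec, dotProduct]
  exact Finset.sum_nonneg fun j _ => mul_nonneg (hM i j) (hv j)

private lemma single_mem_cone {n : ℕ} (j : Fin n) :
    ((Pi.single j (1:ℝ), (0 : Fin n → ℝ), (0 : Fin n → ℝ))) ∈ errorCone n := by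
  refine ⟨fun i => ?_, fun i => le_refl 0, fun i => le_refl 0, fun i => ?_⟩ <;>
    · by_cases hi : i = j <;> simp [Pi.single_apply, hi]

/-- **Lemma 1 in error coordinates.** The cone `X_e` is invariant under `G` if and only if
the six entrywise matrix inequalities hold. -/
theorem errorCone_invariant_iff {n m p : ℕ}
    (A : Matrix (Fin n) (Fin n) ℝ) (B : Matrix (Fin n) (Fin m) ℝ)
    (C : Matrix (Fin p) (Fin n) ℝ)
    (Ku Kl : Matrix (Fin m) (Fin n) ℝ) (Lu Ll : Matrix (Fin n) (Fin p) ℝ) :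
    (∀ z ∈ errorCone n, Gmap A B C Ku Kl Lu Ll z ∈ errorCone n) ↔
    ((∀ i j, 0 ≤ (A + B * (Ku + Kl)) i j) ∧
     (∀ i j, 0 ≤ (A + B * Ku) i j) ∧
     (∀ i j, 0 ≤ (B * Ku) i j) ∧
     (∀ i j, 0 ≤ (A - Lu * C) i j) ∧
     (∀ i j, 0 ≤ (A - Ll * C) i j) ∧
     (∀ i j, 0 ≤ (B * Ku + Ll * C) i j)) := by
  constructor
  · intro h
    -- test points
    have hx : ∀ j : Fin n, Gmap A B C Ku Kl Lu Ll (Pi.single j 1, 0, 0) ∈ errorCone n :=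
      fun j => h _ (single_mem_cone j)
    have he : ∀ j : Fin n, Gmap A B C Ku Kl Lu Ll (0, Pi.single j 1, 0) ∈ errorCone n := by
      intro j
      refine h _ ⟨fun i => le_refl 0, fun i => ?_, fun i => le_refl 0, fun i => le_refl 0⟩
      by_cases hi : i = j <;> simp [Pi.single_apply, hi]
    have hxe : ∀ j : Fin n,
        Gmap A B C Ku Kl Lu Ll (Pi.single j 1, 0, Pi.single j 1) ∈ errorCone n := by
      intro j
      refine h _ ⟨fun i => ?_, fun i => le_refl 0, fun i => ?_, fun i => le_refl _⟩ <;>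
        · by_cases hi : i = j <;> simp [Pi.single_apply, hi]
    refine ⟨fun i j => ?_, fun i j => ?_, fun i j => ?_, fun i j => ?_, fun i j => ?_,
      fun i j => ?_⟩
    · have := (hx j).1 i
      simpa [Gmap, mulVec_single] using this
    · -- from hxe first component: (M1 - M3) single = (A + B*Ku) single
      have := (hxe j).1 i
      simp only [Gmap, mulVec_single, mulVec_zero, mul_one, add_zero, Pi.add_apply,
        Pi.sub_apply, Pi.zero_apply, Pi.smul_apply, MulOpposite.op_one, one_smul,
        Matrix.col_apply] at this
      have h2 : (A + B * (Ku + Kl)) i j - (B * Kl) i j = (A + B * Ku) i j := by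
        simp [Matrix.mul_add]; ring
      linarith [this, h2.symm.le]
    · have := (he j).1 i
      simpa [Gmap, mulVec_single] using this
    · have := (he j).2.1 i
      simpa [Gmap, mulVec_single] using this
    · have := (hxe j).2.2.1 i
      simpa [Gmap, mulVec_single] using this
    · -- from hxe: (A - Ll*C) single ≤ M1 single - M3 single
      have := (hxe j).2.2.2 i
      simp only [Gmap, mulVec_single, mulVec_zero, mul_one, add_zero, Pi.add_apply,
        Pi.sub_apply, Pi.zero_apply, Pi.smul_apply, MulOpposite.op_one, one_smul,
        Matrix.col_apply] at this
      have h2 : (A + B * (Ku + Kl)) i j - (B * Kl) i j = (A + B * Ku) i j := by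
        simp [Matrix.mul_add]; ring
      have h3 : (B * Ku + Ll * C) i j = (A + B * Ku) i j - (A - Ll * C) i j := by
        simp only [Matrix.add_apply, Matrix.sub_apply]; ring
      rw [h3]
      linarith [h2]
  · rintro ⟨h1, h2, h3, h4, h5, h6⟩ z ⟨hzx, hze, hzl, hzle⟩
    obtain ⟨x, eu, el⟩ := z
    simp only [errorCone, Gmap, Set.mem_setOf_eq] at *
    have hd : ∀ i, 0 ≤ (x - el) i := fun i => by
      simpa using sub_nonneg.2 (hzle i)
    -- key decomposition
    have key : (A + B * (Ku + Kl)) *ᵥ x + (B * Ku) *ᵥ eu - (B * Kl) *ᵥ el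
        = (A + B * (Ku + Kl)) *ᵥ (x - el) + (A + B * Ku) *ᵥ el + (B * Ku) *ᵥ eu := by
      have : (A + B * (Ku + Kl)) *ᵥ x = (A + B * (Ku + Kl)) *ᵥ (x - el)
          + (A + B * (Ku + Kl)) *ᵥ el := by
        rw [← Matrix.mulVec_add]; congr 1; funext i; simp
      rw [this]
      have hM : (A + B * (Ku + Kl)) *ᵥ el - (B * Kl) *ᵥ el = (A + B * Ku) *ᵥ el := by
        rw [← Matrix.sub_mulVec]; congr 1
        rw [Matrix.mul_add]; abel
      funext i
      simp only [Pi.add_apply, Pi.sub_apply] at *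
      have := congrFun hM i
      simp only [Pi.sub_apply, Pi.add_apply] at this
      linarith
    refine ⟨fun i => ?_, fun i => mulVec_entry_nonneg h4 hze i,
      fun i => mulVec_entry_nonneg h5 hzl i, fun i => ?_⟩
    · rw [key]
      exact add_nonneg (add_nonneg (mulVec_entry_nonneg h1 hd i)
        (mulVec_entry_nonneg h2 hzl i)) (mulVec_entry_nonneg h3 hze i)
    · -- (A - Ll C) el ≤ first component
      rw [key]
      have hdiff : (A + B * Ku) *ᵥ el - (A - Ll * C) *ᵥ el = (B * Ku + Ll * C) *ᵥ el := by
        rw [← Matrix.sub_mulVec]; congr 1; abel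
      have h1' := mulVec_entry_nonneg h1 hd i
      have h3' := mulVec_entry_nonneg h3 hze i
      have h6' := mulVec_entry_nonneg h6 hzl i
      have := congrFun hdiff i
      simp only [Pi.sub_apply, Pi.add_apply] at this ⊢
      linarith
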